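/- If there exists a map f = (f₁, f₂) : X×A → Y×B with f#μ = ν, f₁ : X → Y an isometry, and f₂ = Id (so A = B and f₂(a) = a), then FGW_{α,p,q}(μ,ν) = 0 for all α ∈ (0,1), p, q ≥ 1. -/

import Mathlib

open MeasureTheory ENNReal Set

noncomputable section

/-- The set of couplings of two probability measures on `X × Ω` and `Y × Ω`. -/
def Couplings {X Y Ω : Type*} [MeasurableSpace X] [MeasurableSpace Y] [MeasurableSpace Ω]
    (μ : Measure (X × Ω)) (ν : Measure (Y × Ω)) : Set (Measure ((X × Ω) × (Y × Ω))) :=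
  {π | π.map Prod.fst = μ ∧ π.map Prod.snd = ν}

/-- The fused Gromov-Wasserstein cost of a coupling `π`, with trade-off `α` and
exponents `p, q`. Here `w.1.1, w.2.1` are the structure points `x, y` and
`w.1.2, w.2.2` the feature points `a, b`. -/
def fgwE {X Y Ω : Type*} [MetricSpace X] [MetricSpace Y] [MetricSpace Ω]
    [MeasurableSpace X] [MeasurableSpace Y] [MeasurableSpace Ω]
    (α p q : ℝ) (π : Measure ((X × Ω) × (Y × Ω))) : ℝ≥0∞ :=
  ∫⁻ w, (∫⁻ w', ENNReal.ofReal
      (((1 - α) * dist w.1.2 w.2.2 ^ q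
        + α * |dist w.1.1 w'.1.1 - dist w.2.1 w'.2.1| ^ q) ^ p) ∂π) ∂π

/-- The fused Gromov-Wasserstein distance. -/
def FGW {X Y Ω : Type*} [MetricSpace X] [MetricSpace Y] [MetricSpace Ω]
    [MeasurableSpace X] [MeasurableSpace Y] [MeasurableSpace Ω]
    (α p q : ℝ) (μ : Measure (X × Ω)) (ν : Measure (Y × Ω)) : ℝ≥0∞ :=
  (⨅ π ∈ Couplings μ ν, fgwE α p q π) ^ (1 / p)


theorem stmt10 {X Y Ω : Type*} [MetricSpace X] [MetricSpace Y] [MetricSpace Ω]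
    [MeasurableSpace X] [BorelSpace X] [MeasurableSpace Y] [BorelSpace Y]
    [MeasurableSpace Ω] [BorelSpace Ω]
    (μ : Measure (X × Ω)) (ν : Measure (Y × Ω))
    [IsProbabilityMeasure μ] [IsProbabilityMeasure ν]
    (f₁ : X → Y) (hsurj : Function.Surjective f₁)
    (hiso : ∀ x x' : X, dist (f₁ x) (f₁ x') = dist x x')
    (hpush : μ.map (fun z => (f₁ z.1, z.2)) = ν)
    (α p q : ℝ) (hα : α ∈ Set.Ioo (0 : ℝ) 1) (hp : 1 ≤ p) (hq : 1 ≤ q) :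
    FGW α p q μ ν = 0 := by
  have hf₁c : Continuous f₁ := by
    have : Isometry f₁ := Isometry.of_dist_eq fun a b => hiso a b
    exact this.continuous
  have hf₁m : Measurable f₁ := hf₁c.measurable
  set g : X × Ω → (X × Ω) × (Y × Ω) := fun z => (z, (f₁ z.1, z.2)) with hg
  have hgm : Measurable g :=
    measurable_id.prodMk ((hf₁m.comp measurable_fst).prodMk measurable_snd)
  set π : Measure ((X × Ω) × (Y × Ω)) := μ.map g with hπ
  have hcoup : π ∈ Couplings μ ν := by
    constructor
    · rw [hπ, Measure.map_map measurable_fst hgm]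
      rw [show (Prod.fst ∘ g) = id from rfl, Measure.map_id]
    · rw [hπ, Measure.map_map measurable_snd hgm]
      simpa [hg, Function.comp_def] using hpush
  have hzero : fgwE α p q π = 0 := by
    have hle : fgwE α p q π ≤ 0 := by
      unfold fgwE
      calc ∫⁻ w, (∫⁻ w', ENNReal.ofReal
            (((1 - α) * dist w.1.2 w.2.2 ^ q
              + α * |dist w.1.1 w'.1.1 - dist w.2.1 w'.2.1| ^ q) ^ p) ∂π) ∂π
          ≤ ∫⁻ z, (∫⁻ w', ENNReal.ofReal
            (((1 - α) * dist (g z).1.2 (g z).2.2 ^ q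
              + α * |dist (g z).1.1 w'.1.1 - dist (g z).2.1 w'.2.1| ^ q) ^ p) ∂π) ∂μ := by
            rw [hπ]
            exact lintegral_map_le _ g
        _ ≤ ∫⁻ z, (∫⁻ z', ENNReal.ofReal
            (((1 - α) * dist (g z).1.2 (g z).2.2 ^ q
              + α * |dist (g z).1.1 (g z').1.1 - dist (g z).2.1 (g z').2.1| ^ q) ^ p) ∂μ) ∂μ := by
            refine lintegral_mono fun z => ?_
            rw [hπ]
            exact lintegral_map_le _ g
        _ = 0 := by
            have hq0 : q ≠ 0 := by linarith
            have hp0 : p ≠ 0 := by linarith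
            simp [hg, hiso, dist_self, sub_self, abs_zero, Real.zero_rpow hq0,
              Real.zero_rpow hp0]
    exact le_antisymm hle zero_le
  have hinf : (⨅ π' ∈ Couplings μ ν, fgwE α p q π') = 0 := by
    refine le_antisymm ?_ zero_le
    calc (⨅ π' ∈ Couplings μ ν, fgwE α p q π') ≤ fgwE α p q π := biInf_le _ hcoup
      _ = 0 := hzero
  rw [FGW, hinf]
  exact ENNReal.zero_rpow_of_pos (by positivity)
end
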